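/- Let u = u_j be the output of SSP value iteration stopped when ||u_{j+1} - u_j||_∞ ≤ γ with γ ≤ c_min/2, and π the greedy policy w.r.t. u. Then the true value function of π satisfies V^π ≤ (1 + 2γ/c_min) · u component-wise. -/

import Mathlib

open Filter Matrix

/-- The transition matrix induced by a Markov policy `π`. -/
def polMat {S A : Type*} (p : S → A → S → ℝ) (π : S → A) : Matrix S S ℝ :=
  Matrix.of fun s s' => p s (π s) s'

/-- Value function of a policy in an SSP-MDP (expected cumulative cost to the goal). -/
noncomputable def polVal {S A : Type*} [Fintype S] [DecidableEq S]
    (p : S → A → S → ℝ) (c : S → A → ℝ) (π : S → A) (s : S) : ℝ :=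
  ∑' n : ℕ, ((polMat p π ^ n).mulVec fun s' => c s' (π s')) s

/-- A policy is proper if its survival probabilities tend to zero. -/
def polProper {S A : Type*} [Fintype S] [DecidableEq S]
    (p : S → A → S → ℝ) (π : S → A) : Prop :=
  Tendsto (fun n => (polMat p π ^ n).mulVec fun _ => (1 : ℝ)) atTop (nhds 0)

/-- Let `u = u j` be the output of SSP value iteration stopped when
`‖u (j+1) - u j‖_∞ ≤ γ` with `γ ≤ cmin/2`, and `π` the greedy policy w.r.t. `u j`.
Then the true value function of `π` satisfies `V^π ≤ (1 + 2γ/cmin) · u` componentwise. -/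
theorem stmt_5 {S A : Type*} [Fintype S] [DecidableEq S] [Fintype A] [Nonempty A]
    (p : S → A → S → ℝ) (c : S → A → ℝ) (cmin γ : ℝ)
    (hp0 : ∀ s a s', 0 ≤ p s a s') (hprow : ∀ s a, ∑ s', p s a s' ≤ 1)
    (hcmin : 0 < cmin) (hc : ∀ s a, cmin ≤ c s a ∧ c s a ≤ 1)
    (hγ : 0 < γ) (hγhalf : γ ≤ cmin / 2)
    (hex : ∃ π0 : S → A, polProper p π0)
    (L : (S → ℝ) → S → ℝ)
    (hL : ∀ u s, L u s = ⨅ a : A, (c s a + ∑ s', p s a s' * u s'))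
    (u : ℕ → S → ℝ) (hu0 : u 0 = 0) (hu : ∀ i, u (i + 1) = L (u i))
    (j : ℕ) (hstop : ∀ s, |u (j + 1) s - u j s| ≤ γ)
    (π : S → A)
    (hπ : ∀ s, c s (π s) + ∑ s', p s (π s) s' * u j s' = L (u j) s) :
    ∀ s, polVal p c π s ≤ (1 + 2 * γ / cmin) * u j s := by
  set P := polMat p π with hP
  set cπ : S → ℝ := fun s => c s (π s) with hcπ
  set α : ℝ := 1 + 2 * γ / cmin with hα
  set w : S → ℝ := fun s => α * u j s with hwdef
  have hα1 : 1 ≤ α := by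
    have : 0 ≤ 2 * γ / cmin := by positivity
    simp [hα]; linarith
  have hα0 : 0 ≤ α := by linarith
  have hα2 : α ≤ 2 := by
    have h : 2 * γ / cmin ≤ 1 := by
      rw [div_le_one hcmin]; linarith
    simp [hα]; linarith
  have hαγ : (α - 1) * cmin = 2 * γ := by
    rw [hα, add_sub_cancel_left, div_mul_cancel₀ _ hcmin.ne']
  -- nonnegativity of iterates
  have hu_nonneg : ∀ i s, 0 ≤ u i s := by
    intro i
    induction i with
    | zero => intro s; simp [hu0]
    | succ i ih =>
      intro s
      rw [hu, hL]
      refine le_ciInf fun a => ?_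
      have h1 : 0 ≤ ∑ s', p s a s' * u i s' :=
        Finset.sum_nonneg fun s' _ => mul_nonneg (hp0 s a s') (ih s')
      have h2 := (hc s a).1
      linarith
  have hujn : ∀ s, 0 ≤ u j s := hu_nonneg j
  have hwnn : ∀ s, 0 ≤ w s := fun s => mul_nonneg hα0 (hujn s)
  -- key inequality from stopping criterion
  have hkey : ∀ s, cπ s + ∑ s', p s (π s) s' * u j s' ≤ u j s + γ := by
    intro s
    have h1 := hπ s
    have h2 := abs_le.mp (hstop s)
    have h3 : u (j + 1) s = L (u j) s := by rw [hu]
    rw [h1, ← h3]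
    linarith [h2.2]
  -- fixed point inequality for w
  have hw : ∀ s, cπ s + (P.mulVec w) s ≤ w s := by
    intro s
    have hsum : (P.mulVec w) s = α * ∑ s', p s (π s) s' * u j s' := by
      simp only [Matrix.mulVec, dotProduct, hwdef, hP, polMat, Matrix.of_apply,
        Finset.mul_sum]
      exact Finset.sum_congr rfl fun s' _ => by ring
    rw [hsum]
    have hk := hkey s
    have hcge := (hc s (π s)).1
    have A : α * (cπ s + ∑ s', p s (π s) s' * u j s') ≤ α * (u j s + γ) :=
      mul_le_mul_of_nonneg_left hk hα0
    have B : (α - 1) * cmin ≤ (α - 1) * cπ s :=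
      mul_le_mul_of_nonneg_left hcge (by linarith)
    have D : α * γ ≤ 2 * γ := mul_le_mul_of_nonneg_right hα2 (le_of_lt hγ)
    show cπ s + α * (∑ s', p s (π s) s' * u j s') ≤ α * u j s
    nlinarith [A, B, D, hαγ]
  -- nonnegativity of matrix powers
  have hPnn : ∀ n (s s' : S), 0 ≤ (P ^ n) s s' := by
    intro n
    induction n with
    | zero =>
      intro s s'
      simp only [pow_zero, Matrix.one_apply]
      split_ifs <;> norm_num
    | succ n ih =>
      intro s s'
      rw [pow_succ, Matrix.mul_apply]
      exact Finset.sum_nonneg fun t _ =>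
        mul_nonneg (ih s t) (by simpa [hP, polMat] using hp0 t (π t) s')
  have hcπnn : ∀ s, 0 ≤ cπ s := fun s => le_trans (le_of_lt hcmin) (hc s (π s)).1
  have hterm_nn : ∀ n s, 0 ≤ ((P ^ n).mulVec cπ) s := fun n s =>
    Finset.sum_nonneg fun t _ => mul_nonneg (hPnn n s t) (hcπnn t)
  have hPw_nn : ∀ n s, 0 ≤ ((P ^ n).mulVec w) s := fun n s =>
    Finset.sum_nonneg fun t _ => mul_nonneg (hPnn n s t) (hwnn t)
  -- monotone step
  have hstep : ∀ N s, ((P ^ N).mulVec cπ) s + ((P ^ (N + 1)).mulVec w) s ≤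
      ((P ^ N).mulVec w) s := by
    intro N s
    have hmono : ((P ^ N).mulVec (fun t => cπ t + (P.mulVec w) t)) s ≤
        ((P ^ N).mulVec w) s := by
      simp only [Matrix.mulVec, dotProduct]
      exact Finset.sum_le_sum fun t _ =>
        mul_le_mul_of_nonneg_left (hw t) (hPnn N s t)
    have hsplit : ((P ^ N).mulVec (fun t => cπ t + (P.mulVec w) t)) s =
        ((P ^ N).mulVec cπ) s + ((P ^ (N + 1)).mulVec w) s := by
      have h1 : (P ^ N).mulVec (cπ + P.mulVec w) =
          (P ^ N).mulVec cπ + (P ^ N).mulVec (P.mulVec w) := Matrix.mulVec_add _ _ _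
      have h2 : (P ^ N).mulVec (P.mulVec w) = (P ^ (N + 1)).mulVec w := by
        rw [Matrix.mulVec_mulVec, ← pow_succ]
      have := congrFun h1 s
      simp only [Pi.add_apply] at this
      rw [show (fun t => cπ t + (P.mulVec w) t) = cπ + P.mulVec w from rfl, this, ← h2]
    rw [← hsplit]
    exact hmono
  -- partial sum bound
  have hbound : ∀ N s, (∑ n ∈ Finset.range N, ((P ^ n).mulVec cπ) s) ≤ w s := by
    have haux : ∀ N s, (∑ n ∈ Finset.range N, ((P ^ n).mulVec cπ) s) +
        ((P ^ N).mulVec w) s ≤ w s := by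
      intro N
      induction N with
      | zero =>
        intro s
        simp [Matrix.one_mulVec]
      | succ N ih =>
        intro s
        rw [Finset.sum_range_succ]
        have := hstep N s
        have := ih s
        linarith
    intro N s
    have := haux N s
    have := hPw_nn N s
    linarith
  intro s
  have hsummable : Summable fun n : ℕ => ((P ^ n).mulVec cπ) s :=
    summable_of_sum_range_le (fun n => hterm_nn n s) (fun N => hbound N s)
  have hsum_le : ∑' n : ℕ, ((P ^ n).mulVec cπ) s ≤ w s :=
    Summable.tsum_le_of_sum_range_le hsummable (fun N => hbound N s)
  simpa [polVal, hP, hcπ, hwdef] using hsum_le
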